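/- If a topological space X is a union X = Z ∪ ⋃_i U_i where each U_i is open in X and Z is the set of points not in any U_i, then for every ordinal α we have X^(α) = (X^(α) ∩ Z) ∪ ⋃_i (U_i)^(α), where (U_i)^(α) is computed in the subspace topology on U_i. -/

import Mathlib

open Topology Filter Set

/-- Cantor-Bendixson derivative of a set: the points of `A` that are not
isolated in the subspace topology of `A`, i.e. accumulation points of `A`. -/
def cbd {X : Type*} [TopologicalSpace X] (A : Set X) : Set X :=
  {x ∈ A | AccPt x (Filter.principal A)}

/-- Iterated Cantor-Bendixson derivative. -/
noncomputable def cbIter {X : Type*} [TopologicalSpace X] (A : Set X) (o : Ordinal) : Set X :=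
  Ordinal.limitRecOn o A (fun _ ih => cbd ih)
    (fun o _ ih => ⋂ (b : Set.Iio o), ih b.1 b.2)

lemma cbIter_zero {X : Type*} [TopologicalSpace X] (A : Set X) : cbIter A 0 = A :=
  Ordinal.limitRecOn_zero ..

lemma cbIter_succ {X : Type*} [TopologicalSpace X] (A : Set X) (o : Ordinal) :
    cbIter A (Order.succ o) = cbd (cbIter A o) :=
  Ordinal.limitRecOn_succ ..

lemma cbIter_limit {X : Type*} [TopologicalSpace X] (A : Set X) {o : Ordinal}
    (ho : Order.IsSuccLimit o) : cbIter A o = ⋂ (b : Set.Iio o), cbIter A b.1 :=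
  Ordinal.limitRecOn_limit _ _ _ _ ho

lemma cbd_inter_open {X : Type*} [TopologicalSpace X] (A : Set X) {U : Set X}
    (hU : IsOpen U) : cbd (A ∩ U) = cbd A ∩ U := by
  ext x
  simp only [cbd, mem_inter_iff, mem_sep_iff]
  constructor
  · rintro ⟨⟨hA, hxU⟩, hacc⟩
    exact ⟨⟨hA, hacc.mono (principal_mono.2 inter_subset_left)⟩, hxU⟩
  · rintro ⟨⟨hA, hacc⟩, hxU⟩
    refine ⟨⟨hA, hxU⟩, ?_⟩
    have hUnhds : U ∈ 𝓝[≠] x := mem_nhdsWithin_of_mem_nhds (hU.mem_nhds hxU)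
    rw [AccPt] at hacc ⊢
    have heq : 𝓝[≠] x ⊓ 𝓟 (A ∩ U) = 𝓝[≠] x ⊓ 𝓟 A := by
      rw [← inf_principal, inf_comm (𝓟 A), ← inf_assoc,
        inf_of_le_left (le_principal_iff.2 hUnhds)]
    rw [heq]; exact hacc

lemma cbIter_inter_open {X : Type*} [TopologicalSpace X] (A : Set X) {U : Set X}
    (hU : IsOpen U) (α : Ordinal) : cbIter (A ∩ U) α = cbIter A α ∩ U := by
  induction α using Ordinal.limitRecOn with
  | zero => rw [cbIter_zero, cbIter_zero]
  | add_one o ih => rw [Ordinal.add_one_eq_succ, cbIter_succ, cbIter_succ, ih, cbd_inter_open _ hU]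
  | limit o ho ih =>
      rw [cbIter_limit _ ho, cbIter_limit _ ho]
      have : Nonempty (Set.Iio o) := ⟨⟨0, ho.pos⟩⟩
      rw [iInter_inter]
      exact iInter_congr fun b => ih b.1 b.2

/-- If X = Z ∪ ⋃ i, U i with each U i open and Z the set of points in no U i, then
X^(α) = (X^(α) ∩ Z) ∪ ⋃ i, (U i)^(α). -/
theorem cbIter_decomposition {X : Type*} [TopologicalSpace X] {ι : Type*}
    (U : ι → Set X) (hU : ∀ i, IsOpen (U i)) (Z : Set X)
    (hZ : Z = {x : X | ∀ i, x ∉ U i}) (α : Ordinal) :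
    cbIter (Set.univ : Set X) α =
      (cbIter (Set.univ : Set X) α ∩ Z) ∪ ⋃ i, cbIter (U i) α := by
  have hUi : ∀ i, cbIter (U i) α = cbIter (Set.univ : Set X) α ∩ U i := by
    intro i
    rw [← cbIter_inter_open _ (hU i), univ_inter]
  have hcover : Z ∪ ⋃ i, U i = univ := by
    ext x; simp only [hZ, mem_union, mem_setOf_eq, mem_iUnion, mem_univ, iff_true]
    by_cases h : ∃ i, x ∈ U i
    · exact Or.inr h
    · exact Or.inl (fun i hi => h ⟨i, hi⟩)
  calc cbIter (Set.univ : Set X) α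
      = cbIter (Set.univ : Set X) α ∩ (Z ∪ ⋃ i, U i) := by rw [hcover, inter_univ]
    _ = (cbIter (Set.univ : Set X) α ∩ Z) ∪ ⋃ i, cbIter (U i) α := by
        rw [inter_union_distrib_left, inter_iUnion]
        congr 1
        exact iUnion_congr fun i => (hUi i).symm
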